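/- Let X be a fractional allocation of the m item types that is Pareto optimal under the valuations v. Let T items be given, where item t has type τ(t), and let a be any integral allocation of these items such that X_{a(t),τ(t)} > 0 for every t. Then a is Pareto optimal among integral allocations of these T items under v. -/

import Mathlib

open Finset

/-- `X` is a fractional allocation of `m` divisible item types to `n` agents. -/
def IsAlloc {n m : ℕ} (X : Fin n → Fin m → ℝ) : Prop :=
  (∀ i j, X i j ∈ Set.Icc (0 : ℝ) 1) ∧ ∀ j, ∑ i, X i j = 1

/-- Agent `i`'s additive value for a fractional bundle `y` under valuations `u`. -/
def val {n m : ℕ} (u : Fin n → Fin m → ℝ) (i : Fin n) (y : Fin m → ℝ) : ℝ :=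
  ∑ k, u i k * y k

/-- `X` is Pareto optimal under valuations `u`. -/
def ParetoOpt {n m : ℕ} (u : Fin n → Fin m → ℝ) (X : Fin n → Fin m → ℝ) : Prop :=
  ¬ ∃ X' : Fin n → Fin m → ℝ, IsAlloc X' ∧
    (∀ i, val u i (X i) ≤ val u i (X' i)) ∧ (∃ i, val u i (X i) < val u i (X' i))

/-- Agent `i`'s utility under the integral allocation `a` of `T` items,
where item `t` has type `τ t`. -/
def util {n m T : ℕ} (v : Fin n → Fin m → ℝ) (τ : Fin T → Fin m)
    (a : Fin T → Fin n) (i : Fin n) : ℝ :=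
  ∑ t, if a t = i then v i (τ t) else 0

/-- Let `X` be a fractional allocation of the `m` item types that is Pareto optimal
under `v`. Then any integral allocation `a` of `T` items (item `t` of type `τ t`) that
assigns an item of type `k` to agent `i` only if `X_{ik} > 0` is Pareto optimal among
integral allocations of these items under `v`. -/
theorem integral_paretoOpt_of_fractional_paretoOpt
    (n m T : ℕ)
    (v : Fin n → Fin m → ℝ) (hv : ∀ i k, v i k ∈ Set.Icc (0 : ℝ) 1)
    (X : Fin n → Fin m → ℝ) (hX : IsAlloc X)
    (hPO : ParetoOpt v X)
    (τ : Fin T → Fin m) (a : Fin T → Fin n)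
    (ha : ∀ t, 0 < X (a t) (τ t)) :
    ¬ ∃ a' : Fin T → Fin n,
      (∀ i, util v τ a i ≤ util v τ a' i) ∧ (∃ i, util v τ a i < util v τ a' i) := by
  rintro ⟨a', hge, i0, hlt⟩
  classical
  rcases Nat.eq_zero_or_pos T with hT0 | hT0
  · subst hT0; simp [util] at hlt
  have hne : (Finset.univ : Finset (Fin T)).Nonempty := ⟨⟨0, hT0⟩, Finset.mem_univ _⟩
  set μ : ℝ := Finset.univ.inf' hne (fun t => X (a t) (τ t)) with hμdef
  have hμpos : 0 < μ := by
    rw [hμdef, Finset.lt_inf'_iff]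
    intro t _; exact ha t
  have hμle : ∀ t, μ ≤ X (a t) (τ t) := fun t => Finset.inf'_le _ (Finset.mem_univ t)
  set ε : ℝ := μ / T with hεdef
  have hTpos : (0:ℝ) < T := by exact_mod_cast hT0
  have hεpos : 0 < ε := div_pos hμpos hTpos
  have hεT : ε * T = μ := by rw [hεdef]; field_simp [hTpos.ne']
  set c : (Fin T → Fin n) → Fin n → Fin m → ℝ :=
    fun b i k => ((Finset.univ.filter (fun t => b t = i ∧ τ t = k)).card : ℝ) with hcdef
  have hc_sum : ∀ b i k, c b i k = ∑ t, if b t = i ∧ τ t = k then (1:ℝ) else 0 := by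
    intro b i k
    rw [hcdef]
    simp [Finset.sum_boole]
  have hc_nonneg : ∀ b i k, 0 ≤ c b i k := by
    intro b i k; rw [hcdef]; positivity
  have hc_leT : ∀ i k, c a i k ≤ T := by
    intro i k
    have h := Finset.card_filter_le (Finset.univ : Finset (Fin T)) (fun t => a t = i ∧ τ t = k)
    rw [Finset.card_univ, Fintype.card_fin] at h
    simp only [hcdef]
    exact_mod_cast h
  have key : ∀ b : Fin T → Fin n, ∀ k, ∑ i, c b i k = ∑ t, if τ t = k then (1:ℝ) else 0 := by
    intro b k
    simp only [hc_sum]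
    rw [Finset.sum_comm]
    refine Finset.sum_congr rfl fun t _ => ?_
    by_cases h : τ t = k
    · simp [h, Finset.sum_ite_eq]
    · simp [h]
  have hval : ∀ b : Fin T → Fin n, ∀ i, ∑ k, v i k * c b i k = util v τ b i := by
    intro b i
    simp only [hc_sum, Finset.mul_sum]
    rw [Finset.sum_comm]
    unfold util
    refine Finset.sum_congr rfl fun t _ => ?_
    by_cases h : b t = i
    · simp [h, mul_ite, mul_one, mul_zero, Finset.sum_ite_eq]
    · simp [h]
  set X' : Fin n → Fin m → ℝ := fun i k => X i k + ε * (c a' i k - c a i k) with hX'def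
  have hnn : ∀ i k, 0 ≤ X' i k := by
    intro i k
    rcases eq_or_lt_of_le (hc_nonneg a i k) with h0 | h0
    · have := (hX.1 i k).1
      have h1 := mul_nonneg hεpos.le (hc_nonneg a' i k)
      show 0 ≤ X i k + ε * (c a' i k - c a i k)
      nlinarith
    · have hcard : 0 < (Finset.univ.filter (fun t => a t = i ∧ τ t = k)).card := by
        simp only [hcdef] at h0; exact_mod_cast h0
      obtain ⟨t, ht⟩ := Finset.card_pos.mp hcard
      rw [Finset.mem_filter] at ht
      obtain ⟨-, ht1, ht2⟩ := ht
      have hXik : μ ≤ X i k := by rw [← ht1, ← ht2]; exact hμle t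
      have h2 := mul_le_mul_of_nonneg_left (hc_leT i k) hεpos.le
      have h1 := mul_nonneg hεpos.le (hc_nonneg a' i k)
      show 0 ≤ X i k + ε * (c a' i k - c a i k)
      nlinarith
  have hcol : ∀ k, ∑ i, X' i k = 1 := by
    intro k
    have h0 : ∑ i, (c a' i k - c a i k) = 0 := by
      rw [Finset.sum_sub_distrib, key a' k, key a k, sub_self]
    rw [hX'def]
    rw [Finset.sum_add_distrib, hX.2 k, ← Finset.mul_sum, h0, mul_zero, add_zero]
  have hub : ∀ i k, X' i k ≤ 1 := by
    intro i k
    have h := Finset.single_le_sum (f := fun i => X' i k) (fun j _ => hnn j k) (Finset.mem_univ i)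
    rw [hcol k] at h
    exact h
  have hvaleq : ∀ i, val v i (X' i) =
      val v i (X i) + ε * (util v τ a' i - util v τ a i) := by
    intro i
    show (∑ k, v i k * (X i k + ε * (c a' i k - c a i k)))
        = (∑ k, v i k * X i k) + ε * (util v τ a' i - util v τ a i)
    rw [← hval a' i, ← hval a i]
    rw [show (∑ k, v i k * (X i k + ε * (c a' i k - c a i k)))
        = ∑ k, (v i k * X i k + (ε * (v i k * c a' i k) - ε * (v i k * c a i k)))
        from Finset.sum_congr rfl fun k _ => by ring]
    rw [Finset.sum_add_distrib, Finset.sum_sub_distrib, ← Finset.mul_sum, ← Finset.mul_sum]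
    ring
  refine hPO ⟨X', ⟨fun i k => ⟨hnn i k, hub i k⟩, hcol⟩, fun i => ?_, ⟨i0, ?_⟩⟩
  · rw [hvaleq i]
    have := hge i
    nlinarith
  · rw [hvaleq i0]
    nlinarith [mul_pos hεpos (sub_pos.mpr hlt)]
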